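/- Let M ∈ {0,*,?}^{p×q} be a pattern matrix with associated directed graph G(M), and suppose the nodes are partitioned into black and white nodes; let D be the p×p diagonal 0-1 matrix with D_{ℓℓ} = 1 exactly when node ℓ is black. If node i has exactly one white out-neighbor j and the edge (i,j) corresponds to a * entry of M (i.e., M_{ji} = *), then for every real matrix A ∈ P(M) and every z ∈ ℝ^p: z^T [A D] = 0 if and only if z^T [A (D + e_j e_j^T)] = 0, where e_j is the j-th standard basis vector. -/

import Mathlib

inductive PSym | zero | star | any
deriving DecidableEq

namespace PSym

def symAdd : PSym → PSym → PSym
  | zero, x => x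
  | x, zero => x
  | _, _ => any

def symMul : PSym → PSym → PSym
  | zero, _ => zero
  | _, zero => zero
  | star, star => star
  | _, _ => any

instance : Zero PSym := ⟨zero⟩
instance : Add PSym := ⟨symAdd⟩

instance : AddCommMonoid PSym where
  add_assoc a b c := by cases a <;> cases b <;> cases c <;> rfl
  zero_add a := by cases a <;> rfl
  add_zero a := by cases a <;> rfl
  add_comm a b := by cases a <;> cases b <;> rfl
  nsmul := nsmulRec

end PSym

/-- The pattern class of a pattern matrix. -/
def PatClass {p q : Type*} (M : Matrix p q PSym) : Set (Matrix p q ℝ) :=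
  {A | ∀ i j, (M i j = PSym.zero → A i j = 0) ∧ (M i j = PSym.star → A i j ≠ 0)}

/-- Product of pattern matrices. -/
def patMul {p q s : ℕ} (M : Matrix (Fin p) (Fin q) PSym) (N : Matrix (Fin q) (Fin s) PSym) :
    Matrix (Fin p) (Fin s) PSym :=
  fun i j => ∑ k, PSym.symMul (M i k) (N k j)

/-- A 1×q pattern vector `M` is independent of an r×q pattern matrix `N`. -/
def Independent {q r : ℕ} (M : Matrix (Fin 1) (Fin q) PSym) (N : Matrix (Fin r) (Fin q) PSym) : Prop :=
  ∀ M₀ ∈ PatClass M, ∀ N₀ ∈ PatClass N, ∀ (z₁ : ℝ) (z₂ : Fin r → ℝ),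
    (∀ j, z₁ * M₀ 0 j + ∑ i, z₂ i * N₀ i j = 0) → z₁ = 0

/-- color-change soundness step, Lemma 7 of the paper: if node
`i` (a column of `M`) has exactly one white out-neighbor `j` with `M j i = *`,
then for every `A ∈ P(M)` and every `z`, `zᵀ[A D] = 0` iff
`zᵀ[A (D + eⱼeⱼᵀ)] = 0`, where `D` is the diagonal 0-1 matrix of black nodes. -/
theorem kernel_unchanged_of_color_change {p q : ℕ}
    (M : Matrix (Fin p) (Fin q) PSym) (black : Set (Fin p)) [DecidablePred (· ∈ black)]
    (i : Fin q) (j : Fin p)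
    (hj_star : M j i = PSym.star) (hj_white : j ∉ black)
    (hunique : ∀ j' : Fin p, M j' i ≠ PSym.zero → j' ∉ black → j' = j) :
    ∀ A ∈ PatClass M, ∀ z : Fin p → ℝ,
      (Matrix.vecMul z A = 0 ∧
        Matrix.vecMul z (Matrix.diagonal fun ℓ => if ℓ ∈ black then (1:ℝ) else 0) = 0) ↔
      (Matrix.vecMul z A = 0 ∧
        Matrix.vecMul z ((Matrix.diagonal fun ℓ => if ℓ ∈ black then (1:ℝ) else 0)
          + Matrix.single j j 1) = 0) := by
  intro A hA z
  set D : Matrix (Fin p) (Fin p) ℝ :=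
    Matrix.diagonal fun ℓ => if ℓ ∈ black then (1:ℝ) else 0 with hD
  -- key: if zᵀA = 0 and z vanishes on black nodes, then z j = 0
  have key : Matrix.vecMul z A = 0 → (∀ ℓ ∈ black, z ℓ = 0) → z j = 0 := by
    intro hzA hblack
    have hcol : ∑ ℓ, z ℓ * A ℓ i = 0 := by
      have := congrFun hzA i
      simpa [Matrix.vecMul, dotProduct] using this
    have hsum : ∑ ℓ, z ℓ * A ℓ i = z j * A j i := by
      apply Finset.sum_eq_single
      · intro ℓ _ hne
        by_cases hb : ℓ ∈ black
        · simp [hblack ℓ hb]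
        · by_cases hz : M ℓ i = PSym.zero
          · simp [(hA ℓ i).1 hz]
          · exact absurd (hunique ℓ hz hb) hne
      · intro h; exact absurd (Finset.mem_univ j) h
    have hAji : A j i ≠ 0 := (hA j i).2 hj_star
    have : z j * A j i = 0 := hsum ▸ hcol
    exact (mul_eq_zero.1 this).resolve_right hAji
  have hvecE : ∀ k, Matrix.vecMul z (Matrix.single j j (1:ℝ)) k
      = if k = j then z j else 0 := by
    intro k
    simp only [Matrix.vecMul, dotProduct, Matrix.single, Matrix.of_apply]
    rw [Finset.sum_eq_single j]
    · by_cases hk : k = j <;> simp [hk, fun h : ¬k = j => Ne.symm h]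
    · intro b _ hb; simp [Ne.symm hb]
    · simp
  have hvecD : ∀ ℓ, Matrix.vecMul z D ℓ = z ℓ * (if ℓ ∈ black then (1:ℝ) else 0) := by
    intro ℓ; simp [hD, Matrix.vecMul_diagonal]
  constructor
  · rintro ⟨hzA, hzD⟩
    refine ⟨hzA, ?_⟩
    have hblack : ∀ ℓ ∈ black, z ℓ = 0 := by
      intro ℓ hℓ
      have := congrFun hzD ℓ
      rw [hvecD ℓ] at this
      simpa [hℓ] using this
    have hzj : z j = 0 := key hzA hblack
    funext k
    rw [Matrix.vecMul_add]
    simp [hvecE k, hzj, congrFun hzD k]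
  · rintro ⟨hzA, hzDE⟩
    refine ⟨hzA, ?_⟩
    have hzj : z j = 0 := by
      have := congrFun hzDE j
      rw [Matrix.vecMul_add] at this
      simp only [Pi.add_apply, hvecD j, hvecE j, if_pos rfl, if_neg hj_white,
        mul_zero, zero_add, Pi.zero_apply] at this
      exact this
    funext k
    have := congrFun hzDE k
    rw [Matrix.vecMul_add] at this
    simpa [hvecE k, hzj] using this
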